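/- In the model M2, for every formula φ of the language Φ (with single propositional variable p and single name Ann), if the truth set [φ] belongs to the family {[p], [⊥], [¬p], [⊤]}, then both truth sets [D_Ann φ] and [@_Ann φ] belong to the family {[p], [⊥], [¬p], [⊤]}. -/

import Mathlib

/-- Formulas of the language Φ: φ ::= p | ¬φ | φ∨φ | @ₙφ | Rₙφ | Dₙφ,
where `P` is the type of propositional variables and `N` the type of names. -/
inductive Formula (P N : Type) : Type
  | var : P → Formula P N
  | neg : Formula P N → Formula P N
  | disj : Formula P N → Formula P N → Formula P N
  | at_ : N → Formula P N → Formula P N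
  | re : N → Formula P N → Formula P N
  | de : N → Formula P N → Formula P N

/-- An epistemic model with extensions. -/
structure Model (P N : Type) where
  W : Type
  A : Type
  sim : A → W → W → Prop
  sim_equiv : ∀ a, Equivalence (sim a)
  ext : W → N → A
  val : P → Set (W × A)

/-- The satisfaction relation `w, a ⊨ φ`. -/
def Model.sat {P N : Type} (M : Model P N) : Formula P N → M.W → M.A → Prop
  | .var p, w, a => (w, a) ∈ M.val p
  | .neg φ, w, a => ¬ M.sat φ w a
  | .disj φ ψ, w, a => M.sat φ w a ∨ M.sat ψ w a
  | .at_ n φ, w, _ => M.sat φ w (M.ext w n)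
  | .re n φ, w, a => ∀ u, M.sim a w u → M.sat φ u (M.ext w n)
  | .de n φ, w, a => ∀ u, M.sim a w u → M.sat φ u (M.ext u n)

/-- The truth set ⟦φ⟧ of a formula. -/
def Model.truthSet {P N : Type} (M : Model P N) (φ : Formula P N) : Set (M.W × M.A) :=
  {x | M.sat φ x.1 x.2}

/-- The model M2: worlds w=0, u=1; agents a=0, b=1; agent a cannot
distinguish the worlds, agent b can; Ann refers to a in w and b in u;
π(p) = {(w,a),(u,b)}. -/
def M2 : Model Unit Unit where
  W := Fin 2
  A := Fin 2
  sim := fun x s t => x = 0 ∨ s = t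
  sim_equiv := fun x =>
    ⟨fun _ => Or.inr rfl, fun h => h.imp id Eq.symm,
     fun h₁ h₂ => by rcases h₁ with h | h <;> rcases h₂ with h' | h' <;> simp_all⟩
  ext := fun w _ => w
  val := fun _ => {((0 : Fin 2), (0 : Fin 2)), (1, 1)}

/-- The family of truth sets {⟦p⟧, ⟦⊥⟧, ⟦¬p⟧, ⟦⊤⟧} in M2 (⟦⊥⟧ = ∅, ⟦⊤⟧ = W×A). -/
def Fam2 : Set (Set (M2.W × M2.A)) :=
  {M2.truthSet (.var ()), ∅, M2.truthSet (.neg (.var ())), Set.univ}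

/-- In M2, if ⟦φ⟧ ∈ {⟦p⟧, ⟦⊥⟧, ⟦¬p⟧, ⟦⊤⟧}, then both
⟦D_Ann φ⟧ and ⟦@_Ann φ⟧ belong to {⟦p⟧, ⟦⊥⟧, ⟦¬p⟧, ⟦⊤⟧}. -/
theorem de_at_closed_in_M2 (φ : Formula Unit Unit) (h : M2.truthSet φ ∈ Fam2) :
    M2.truthSet (.de () φ) ∈ Fam2 ∧ M2.truthSet (.at_ () φ) ∈ Fam2 := by
  have key : (∀ u : Fin 2, M2.sat φ u u) ∨ (∀ u : Fin 2, ¬ M2.sat φ u u) := by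
    rcases h with h | h | h | h
    · left
      intro u
      have : ((u, u) : M2.W × M2.A) ∈ M2.truthSet φ := by
        rw [h]; fin_cases u <;> simp [Model.truthSet, Model.sat, M2]
        exacts [Or.inl rfl, Or.inr rfl]
      exact this
    · right
      intro u hu
      have : ((u, u) : M2.W × M2.A) ∈ M2.truthSet φ := hu
      rw [h] at this; exact this
    · right
      intro u hu
      have : ((u, u) : M2.W × M2.A) ∈ M2.truthSet φ := hu
      rw [h] at this
      fin_cases u <;> simp [Model.truthSet, Model.sat, M2] at this
      exacts [this (Or.inl rfl), this (Or.inr rfl)]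
    · left
      intro u
      have : ((u, u) : M2.W × M2.A) ∈ M2.truthSet φ := by rw [h]; trivial
      exact this
  rcases key with key | key
  · refine ⟨Or.inr (Or.inr (Or.inr ?_)), Or.inr (Or.inr (Or.inr ?_))⟩ <;>
      · show _ = Set.univ
        ext ⟨w, a⟩
        simp only [Model.truthSet, Model.sat, Set.mem_setOf_eq, Set.mem_univ, iff_true]
        try exact fun u _ => key u
        try exact key w
  · refine ⟨Or.inr (Or.inl ?_), Or.inr (Or.inl ?_)⟩ <;>
      · show _ = (∅ : Set (M2.W × M2.A))
        ext ⟨w, a⟩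
        simp only [Model.truthSet, Model.sat, Set.mem_setOf_eq, Set.mem_empty_iff_false,
          iff_false]
        first
        | exact fun hall => key w (hall w (Or.inr rfl))
        | exact key w
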